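/- If the colourings of coloured graphs G and H on vertex set V are generated by permutation groups Γ_G and Γ_H respectively (i.e., vertex and edge colour classes are the orbits of the group), then the colouring of the meet G ∧ H in the lattice of coloured graphs is generated by the group ⟨Γ_G ∪ Γ_H⟩ generated by both groups. In particular, the class of permutation-generated colourings is stable under the meet operation. -/

import Mathlib

/-- `P` is a partition of the set `A` (into nonempty subsets of `A`). -/
def IsPartitionOn {α : Type*} (A : Set α) (P : Set (Set α)) : Prop :=
  ∅ ∉ P ∧ (∀ s ∈ P, s ⊆ A) ∧ ∀ a ∈ A, ∃! s, s ∈ P ∧ a ∈ s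

/-- A vertex and edge coloured graph: a graph together with a vertex colouring
(partition of the vertices) and an edge colouring (partition of the edges). -/
structure ColouredGraph (V : Type*) where
  graph : SimpleGraph V
  VP : Set (Set V)
  EP : Set (Set (Sym2 V))

/-- The data of a coloured graph is valid: `VP` partitions `V` and `EP` partitions the edge set. -/
def ColouredGraph.Valid {V : Type*} (G : ColouredGraph V) : Prop :=
  Setoid.IsPartition G.VP ∧ IsPartitionOn G.graph.edgeSet G.EP

/-- Every class of `P` is a union of classes of `Q` (`P` is coarser than `Q`). -/
def Coarser {α : Type*} (P Q : Set (Set α)) : Prop :=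
  ∀ c ∈ P, ∃ T ⊆ Q, c = ⋃₀ T

/-- The partial ordering on coloured graphs: `G ⪯ H` iff the edge set of `G` is contained in
that of `H`, the vertex partition of `G` is coarser than that of `H`, and every edge colour
class of `G` is a union of edge colour classes of `H`. -/
def CGle {V : Type*} (G H : ColouredGraph V) : Prop :=
  G.graph ≤ H.graph ∧ Coarser G.VP H.VP ∧ Coarser G.EP H.EP

/-- The edge `e` connects the vertex classes `u` and `v`. -/
def Connects {V : Type*} (e : Sym2 V) (u v : Set V) : Prop :=
  ∃ a b, e = s(a, b) ∧ a ∈ u ∧ b ∈ v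

/-- A colouring is edge regular if any two equally coloured edges connect the same pair of
vertex colour classes. -/
def ColouredGraph.EdgeRegular {V : Type*} (G : ColouredGraph V) : Prop :=
  ∀ c ∈ G.EP, ∀ e ∈ c, ∀ f ∈ c,
    ∃ u ∈ G.VP, ∃ v ∈ G.VP, Connects e u v ∧ Connects f u v

/-- The colouring of `G` is generated by the permutation group `Γ`: `Γ` consists of
automorphisms of the graph, and the vertex and edge colour classes are the orbits of `Γ`
on the vertices and on the edges respectively. -/
def ColouredGraph.GeneratedBy {V : Type*} (G : ColouredGraph V)
    (Γ : Subgroup (Equiv.Perm V)) : Prop :=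
  (∀ σ ∈ Γ, ∀ a b : V, G.graph.Adj a b ↔ G.graph.Adj (σ a) (σ b)) ∧
  G.VP = {c | ∃ a : V, c = {b | ∃ σ ∈ Γ, σ a = b}} ∧
  G.EP = {c | ∃ e ∈ G.graph.edgeSet, c = {f | ∃ σ ∈ Γ, Sym2.map (⇑σ) e = f}}


namespace Stmt10Aux

variable {V : Type*} {α : Type*}

/-- Orbit of `a` under `Γ` with respect to an action `act`. -/
def orb (act : Equiv.Perm V → α → α) (Γ : Subgroup (Equiv.Perm V)) (a : α) : Set α :=
  {b | ∃ σ ∈ Γ, act σ a = b}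

section act
variable {act : Equiv.Perm V → α → α} {Γ : Subgroup (Equiv.Perm V)}

lemma mem_orb_self (h1 : ∀ x, act 1 x = x) (a : α) : a ∈ orb act Γ a := ⟨1, one_mem Γ, h1 a⟩

lemma act_inv (h1 : ∀ x, act 1 x = x) (hm : ∀ σ τ x, act (σ * τ) x = act σ (act τ x)) (σ : Equiv.Perm V) (x : α) : act σ⁻¹ (act σ x) = x := by
  rw [← hm, inv_mul_cancel, h1]

lemma orb_eq (h1 : ∀ x, act 1 x = x) (hm : ∀ σ τ x, act (σ * τ) x = act σ (act τ x)) {a b : α} (hb : b ∈ orb act Γ a) : orb act Γ b = orb act Γ a := by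
  obtain ⟨σ, hσ, rfl⟩ := hb
  ext x
  constructor
  · rintro ⟨τ, hτ, rfl⟩
    exact ⟨τ * σ, mul_mem hτ hσ, hm τ σ a⟩
  · rintro ⟨τ, hτ, rfl⟩
    refine ⟨τ * σ⁻¹, mul_mem hτ (inv_mem hσ), ?_⟩
    rw [hm, act_inv h1 hm]

lemma orb_invariant (h1 : ∀ x, act 1 x = x) (hm : ∀ σ τ x, act (σ * τ) x = act σ (act τ x)) {σ : Equiv.Perm V} (hσ : σ ∈ Γ) (a x : α) :
    x ∈ orb act Γ a ↔ act σ x ∈ orb act Γ a := by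
  constructor
  · rintro ⟨τ, hτ, rfl⟩
    exact ⟨σ * τ, mul_mem hσ hτ, hm σ τ a⟩
  · rintro ⟨τ, hτ, he⟩
    refine ⟨σ⁻¹ * τ, mul_mem (inv_mem hσ) hτ, ?_⟩
    rw [hm, he, act_inv h1 hm]

lemma orbs_partition (h1 : ∀ x, act 1 x = x) (hm : ∀ σ τ x, act (σ * τ) x = act σ (act τ x)) (A : Set α) (hA : ∀ a ∈ A, ∀ σ ∈ Γ, act σ a ∈ A) :
    IsPartitionOn A {c | ∃ a ∈ A, c = orb act Γ a} := by
  refine ⟨?_, ?_, ?_⟩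
  · rintro ⟨a, ha, h⟩
    exact absurd (h ▸ mem_orb_self h1 a) (Set.notMem_empty a)
  · rintro s ⟨a, ha, rfl⟩ x ⟨σ, hσ, rfl⟩
    exact hA a ha σ hσ
  · intro a ha
    refine ⟨orb act Γ a, ⟨⟨a, ha, rfl⟩, mem_orb_self h1 a⟩, ?_⟩
    rintro s ⟨⟨b, hb, rfl⟩, has⟩
    exact (orb_eq h1 hm has).symm

end act

lemma sup_ind {Γ₁ Γ₂ : Subgroup (Equiv.Perm V)} (P : Equiv.Perm V → Prop)
    (hone : P 1) (hmul : ∀ a b, P a → P b → P (a * b)) (hinv : ∀ a, P a → P a⁻¹)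
    (h1 : ∀ σ ∈ Γ₁, P σ) (h2 : ∀ σ ∈ Γ₂, P σ) : ∀ σ ∈ Γ₁ ⊔ Γ₂, P σ := by
  have hcl : Γ₁ ⊔ Γ₂ = Subgroup.closure ((Γ₁ : Set (Equiv.Perm V)) ∪ Γ₂) := by
    rw [Subgroup.closure_union, Subgroup.closure_eq, Subgroup.closure_eq]
  rw [hcl]
  intro σ hσ
  refine Subgroup.closure_induction (p := fun g _ => P g) ?_ hone
    (fun a b _ _ ha hb => hmul a b ha hb) (fun a _ ha => hinv a ha) hσ
  rintro x (hx | hx)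
  · exact h1 x hx
  · exact h2 x hx

lemma sUnion_invariant {f : α → α} {T : Set (Set α)}
    (h : ∀ t ∈ T, ∀ x, x ∈ t ↔ f x ∈ t) (x : α) : x ∈ ⋃₀ T ↔ f x ∈ ⋃₀ T := by
  simp only [Set.mem_sUnion]
  exact ⟨fun ⟨t, ht, hx⟩ => ⟨t, ht, (h t ht x).1 hx⟩,
         fun ⟨t, ht, hx⟩ => ⟨t, ht, (h t ht x).2 hx⟩⟩

lemma partitionOn_subset {A : Set α} {P Q : Set (Set α)}
    (hP : IsPartitionOn A P) (hQ : IsPartitionOn A Q)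
    (hPQ : Coarser P Q) (hQP : Coarser Q P) : P ⊆ Q := by
  intro c hc
  obtain ⟨T, hTQ, hcT⟩ := hPQ c hc
  have hcne : c.Nonempty := Set.nonempty_iff_ne_empty.2 (fun h => hP.1 (h ▸ hc))
  obtain ⟨a, ha⟩ := hcne
  obtain ⟨q, hqT, haq⟩ : ∃ q ∈ T, a ∈ q := by
    have := hcT ▸ ha; exact Set.mem_sUnion.1 this
  have hqQ : q ∈ Q := hTQ hqT
  have hqc : q ⊆ c := hcT ▸ Set.subset_sUnion_of_mem hqT
  obtain ⟨S, hSP, hqS⟩ := hQP q hqQ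
  obtain ⟨p, hpS, hap⟩ : ∃ p ∈ S, a ∈ p := Set.mem_sUnion.1 (hqS ▸ haq)
  have hpP : p ∈ P := hSP hpS
  have hpq : p ⊆ q := hqS ▸ Set.subset_sUnion_of_mem hpS
  have haA : a ∈ A := hP.2.1 c hc ha
  obtain ⟨s, -, huniq⟩ := hP.2.2 a haA
  have h1 : p = s := huniq p ⟨hpP, hap⟩
  have h2 : c = s := huniq c ⟨hc, ha⟩
  have : c = q := subset_antisymm (h2 ▸ h1 ▸ hpq) hqc
  exact this ▸ hqQ

lemma partitionOn_eq {A : Set α} {P Q : Set (Set α)}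
    (hP : IsPartitionOn A P) (hQ : IsPartitionOn A Q)
    (hPQ : Coarser P Q) (hQP : Coarser Q P) : P = Q :=
  subset_antisymm (partitionOn_subset hP hQ hPQ hQP) (partitionOn_subset hQ hP hQP hPQ)

lemma isPartition_iff_on_univ (P : Set (Set α)) :
    Setoid.IsPartition P ↔ IsPartitionOn Set.univ P := by
  constructor
  · rintro ⟨h0, h⟩
    exact ⟨h0, fun s _ => Set.subset_univ s, fun a _ => h a⟩
  · rintro ⟨h0, _, h⟩
    exact ⟨h0, fun a => h a (Set.mem_univ a)⟩

end Stmt10Aux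
open Stmt10Aux
/-- If the colourings of `G` and `H` are generated by permutation groups `Γ_G` and `Γ_H`
and `K` is the meet of `G` and `H` in the lattice of coloured graphs, then the colouring
of `K` is generated by the group generated by `Γ_G` and `Γ_H`; in particular
permutation-generated colourings are stable under the meet. -/
theorem stmt10 {V : Type*} (G H K : ColouredGraph V)
    (ΓG ΓH : Subgroup (Equiv.Perm V))
    (hGv : G.Valid) (hHv : H.Valid)
    (hG : G.GeneratedBy ΓG) (hH : H.GeneratedBy ΓH)
    (hKv : K.Valid) (hKG : CGle K G) (hKH : CGle K H)
    (hglb : ∀ K' : ColouredGraph V, K'.Valid → CGle K' G → CGle K' H → CGle K' K) :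
    K.GeneratedBy (ΓG ⊔ ΓH) := by
  classical
  set Γ : Subgroup (Equiv.Perm V) := ΓG ⊔ ΓH with hΓdef
  obtain ⟨hGadj, hGVP, hGEP⟩ := hG
  obtain ⟨hHadj, hHVP, hHEP⟩ := hH
  obtain ⟨hKVPp, hKEPp⟩ := hKv
  -- the vertex action and edge action
  set aV : Equiv.Perm V → V → V := fun σ => ⇑σ with haV
  set aE : Equiv.Perm V → Sym2 V → Sym2 V := fun σ => Sym2.map ⇑σ with haE
  have h1V : ∀ x, aV 1 x = x := fun x => rfl
  have hmV : ∀ σ τ x, aV (σ * τ) x = aV σ (aV τ x) := fun σ τ x => rfl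
  have h1E : ∀ x, aE 1 x = x := fun x => by
    simp [haE, Sym2.map_id]
  have hmE : ∀ σ τ x, aE (σ * τ) x = aE σ (aE τ x) := fun σ τ x => by
    simp only [haE, Equiv.Perm.coe_mul, Sym2.map_map]
  -- orbit descriptions of the colour classes of G and H
  have hGVP' : ∀ c ∈ G.VP, ∃ a, c = orb aV ΓG a := by
    intro c hc; rw [hGVP] at hc; exact hc
  have hHVP' : ∀ c ∈ H.VP, ∃ a, c = orb aV ΓH a := by
    intro c hc; rw [hHVP] at hc; exact hc
  have hGEP' : ∀ c ∈ G.EP, ∃ e, c = orb aE ΓG e := by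
    intro c hc; rw [hGEP] at hc; obtain ⟨e, _, he⟩ := hc; exact ⟨e, he⟩
  have hHEP' : ∀ c ∈ H.EP, ∃ e, c = orb aE ΓH e := by
    intro c hc; rw [hHEP] at hc; obtain ⟨e, _, he⟩ := hc; exact ⟨e, he⟩
  -- invariance of the classes of K.VP under Γ
  have hVinv : ∀ σ ∈ Γ, ∀ c ∈ K.VP, ∀ x, x ∈ c ↔ σ x ∈ c := by
    refine sup_ind (fun σ => ∀ c ∈ K.VP, ∀ x, x ∈ c ↔ σ x ∈ c) ?_ ?_ ?_ ?_ ?_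
    · intro c _ x; simp
    · intro a b ha hb c hc x
      rw [hb c hc x, ha c hc (b x)]; rfl
    · intro a ha c hc x
      constructor
      · intro hx
        have := (ha c hc (a⁻¹ x)).2
        simp only [Equiv.Perm.inv_def, Equiv.apply_symm_apply] at this
        exact this hx
      · intro hx
        have := (ha c hc (a⁻¹ x)).1 hx
        simpa using this
    · intro σ hσ c hc x
      obtain ⟨T, hT, rfl⟩ := hKG.2.1 c hc
      refine sUnion_invariant (fun t ht y => ?_) x
      obtain ⟨a, rfl⟩ := hGVP' t (hT ht)
      exact orb_invariant h1V hmV hσ a y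
    · intro σ hσ c hc x
      obtain ⟨T, hT, rfl⟩ := hKH.2.1 c hc
      refine sUnion_invariant (fun t ht y => ?_) x
      obtain ⟨a, rfl⟩ := hHVP' t (hT ht)
      exact orb_invariant h1V hmV hσ a y
  -- invariance of the classes of K.EP under Γ
  have hEinv : ∀ σ ∈ Γ, ∀ c ∈ K.EP, ∀ x, x ∈ c ↔ Sym2.map ⇑σ x ∈ c := by
    refine sup_ind (fun σ => ∀ c ∈ K.EP, ∀ x, x ∈ c ↔ Sym2.map ⇑σ x ∈ c) ?_ ?_ ?_ ?_ ?_
    · intro c _ x; simp [Sym2.map_id]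
    · intro a b ha hb c hc x
      rw [hb c hc x, ha c hc (Sym2.map ⇑b x), Equiv.Perm.coe_mul, ← Sym2.map_map]
    · intro a ha c hc x
      have key : ∀ y, Sym2.map ⇑a (Sym2.map ⇑a⁻¹ y) = y := fun y => by
        rw [Sym2.map_map]
        have : (⇑a ∘ ⇑a⁻¹) = id := by funext z; simp
        rw [this, Sym2.map_id]; rfl
      constructor
      · intro hx
        have := (ha c hc (Sym2.map ⇑a⁻¹ x)).2
        rw [key x] at this
        exact this hx
      · intro hx
        have := (ha c hc (Sym2.map ⇑a⁻¹ x)).1 hx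
        rwa [key x] at this
    · intro σ hσ c hc x
      obtain ⟨T, hT, rfl⟩ := hKG.2.2 c hc
      refine sUnion_invariant (fun t ht y => ?_) x
      obtain ⟨e, rfl⟩ := hGEP' t (hT ht)
      exact orb_invariant h1E hmE hσ e y
    · intro σ hσ c hc x
      obtain ⟨T, hT, rfl⟩ := hKH.2.2 c hc
      refine sUnion_invariant (fun t ht y => ?_) x
      obtain ⟨e, rfl⟩ := hHEP' t (hT ht)
      exact orb_invariant h1E hmE hσ e y
  -- membership in the edge set via K.EP
  have hedge_mem : ∀ e, e ∈ K.graph.edgeSet ↔ ∃ c ∈ K.EP, e ∈ c := by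
    intro e
    constructor
    · intro he
      obtain ⟨c, ⟨hc, hec⟩, -⟩ := hKEPp.2.2 e he
      exact ⟨c, hc, hec⟩
    · rintro ⟨c, hc, hec⟩
      exact hKEPp.2.1 c hc hec
  -- invariance of the edge set of K under Γ
  have hedge : ∀ σ ∈ Γ, ∀ e, e ∈ K.graph.edgeSet ↔ Sym2.map ⇑σ e ∈ K.graph.edgeSet := by
    intro σ hσ e
    rw [hedge_mem, hedge_mem]
    exact ⟨fun ⟨c, hc, hec⟩ => ⟨c, hc, (hEinv σ hσ c hc e).1 hec⟩,
           fun ⟨c, hc, hec⟩ => ⟨c, hc, (hEinv σ hσ c hc e).2 hec⟩⟩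
  -- the candidate coloured graph generated by Γ
  set K' : ColouredGraph V :=
    ⟨K.graph, {c | ∃ a, c = orb aV Γ a}, {c | ∃ e ∈ K.graph.edgeSet, c = orb aE Γ e}⟩
    with hK'def
  have hK'VP : K'.VP = {c | ∃ a ∈ (Set.univ : Set V), c = orb aV Γ a} := by
    ext c; simp [hK'def]
  have hK'valid : K'.Valid := by
    constructor
    · rw [isPartition_iff_on_univ]
      show IsPartitionOn Set.univ K'.VP
      rw [hK'VP]
      exact orbs_partition h1V hmV Set.univ (fun a _ σ _ => Set.mem_univ _)
    · show IsPartitionOn K.graph.edgeSet _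
      exact orbs_partition h1E hmE K.graph.edgeSet
        (fun e he σ hσ => (hedge σ hσ e).1 he)
  -- orbits of Γ are unions of orbits of a subgroup
  have korb : ∀ (Δ : Subgroup (Equiv.Perm V)), Δ ≤ Γ →
      ∀ (β : Type _) (act : Equiv.Perm V → β → β),
      (∀ x, act 1 x = x) → (∀ σ τ x, act (σ * τ) x = act σ (act τ x)) →
      ∀ a : β, orb act Γ a = ⋃₀ ((fun b => orb act Δ b) '' (orb act Γ a)) := by
    intro Δ hΔ β act h1 hm a
    apply subset_antisymm
    · intro b hb
      exact Set.mem_sUnion.2 ⟨orb act Δ b, Set.mem_image_of_mem _ hb, mem_orb_self h1 b⟩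
    · rintro b hb
      obtain ⟨t, ⟨c, hc, rfl⟩, hbt⟩ := Set.mem_sUnion.1 hb
      have : b ∈ orb act Γ c := by
        obtain ⟨σ, hσ, rfl⟩ := hbt
        exact ⟨σ, hΔ hσ, rfl⟩
      rw [orb_eq h1 hm hc] at this
      exact this
  -- K' ≤ G and K' ≤ H
  have hK'G : CGle K' G := by
    refine ⟨hKG.1, ?_, ?_⟩
    · rintro c ⟨a, rfl⟩
      refine ⟨(fun b => orb aV ΓG b) '' (orb aV Γ a), ?_, korb ΓG le_sup_left V aV h1V hmV a⟩
      rintro t ⟨b, -, rfl⟩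
      rw [hGVP]; exact ⟨b, rfl⟩
    · rintro c ⟨e, he, rfl⟩
      refine ⟨(fun f => orb aE ΓG f) '' (orb aE Γ e), ?_, korb ΓG le_sup_left (Sym2 V) aE h1E hmE e⟩
      rintro t ⟨f, hf, rfl⟩
      rw [hGEP]
      refine ⟨f, ?_, rfl⟩
      -- f ∈ G.graph.edgeSet : f ∈ orb aE Γ e ⊆ K.edgeSet ⊆ G.edgeSet
      have hfK : f ∈ K.graph.edgeSet := by
        obtain ⟨σ, hσ, rfl⟩ := hf
        exact (hedge σ hσ e).1 he
      exact (SimpleGraph.edgeSet_subset_edgeSet.2 hKG.1) hfK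
  have hK'H : CGle K' H := by
    refine ⟨hKH.1, ?_, ?_⟩
    · rintro c ⟨a, rfl⟩
      refine ⟨(fun b => orb aV ΓH b) '' (orb aV Γ a), ?_, korb ΓH le_sup_right V aV h1V hmV a⟩
      rintro t ⟨b, -, rfl⟩
      rw [hHVP]; exact ⟨b, rfl⟩
    · rintro c ⟨e, he, rfl⟩
      refine ⟨(fun f => orb aE ΓH f) '' (orb aE Γ e), ?_, korb ΓH le_sup_right (Sym2 V) aE h1E hmE e⟩
      rintro t ⟨f, hf, rfl⟩
      rw [hHEP]
      refine ⟨f, ?_, rfl⟩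
      have hfK : f ∈ K.graph.edgeSet := by
        obtain ⟨σ, hσ, rfl⟩ := hf
        exact (hedge σ hσ e).1 he
      exact (SimpleGraph.edgeSet_subset_edgeSet.2 hKH.1) hfK
  have hK'K : CGle K' K := hglb K' hK'valid hK'G hK'H
  -- K.VP is coarser than the Γ-orbit partition
  have hVcoarse : Coarser K.VP K'.VP := by
    intro c hc
    refine ⟨(fun a => orb aV Γ a) '' c, ?_, ?_⟩
    · rintro t ⟨a, -, rfl⟩; exact ⟨a, rfl⟩
    · apply subset_antisymm
      · intro x hx
        exact Set.mem_sUnion.2 ⟨orb aV Γ x, Set.mem_image_of_mem _ hx, mem_orb_self h1V x⟩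
      · intro x hx
        obtain ⟨t, ⟨a, ha, rfl⟩, hxt⟩ := Set.mem_sUnion.1 hx
        obtain ⟨σ, hσ, rfl⟩ := hxt
        exact (hVinv σ hσ c hc a).1 ha
  have hEcoarse : Coarser K.EP K'.EP := by
    intro c hc
    refine ⟨(fun e => orb aE Γ e) '' c, ?_, ?_⟩
    · rintro t ⟨e, he, rfl⟩
      exact ⟨e, hKEPp.2.1 c hc he, rfl⟩
    · apply subset_antisymm
      · intro x hx
        exact Set.mem_sUnion.2 ⟨orb aE Γ x, Set.mem_image_of_mem _ hx, mem_orb_self h1E x⟩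
      · intro x hx
        obtain ⟨t, ⟨e, he, rfl⟩, hxt⟩ := Set.mem_sUnion.1 hx
        obtain ⟨σ, hσ, rfl⟩ := hxt
        exact (hEinv σ hσ c hc e).1 he
  -- partitions equal
  have hVPeq : K.VP = K'.VP := by
    refine partitionOn_eq (A := (Set.univ : Set V)) ?_ ?_ hVcoarse hK'K.2.1
    · exact (isPartition_iff_on_univ _).1 hKVPp
    · exact (isPartition_iff_on_univ _).1 hK'valid.1
  have hEPeq : K.EP = K'.EP := by
    have hK'e : K'.graph.edgeSet = K.graph.edgeSet := rfl
    refine partitionOn_eq (A := K.graph.edgeSet) hKEPp ?_ hEcoarse hK'K.2.2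
    exact hK'valid.2
  refine ⟨?_, ?_, ?_⟩
  · intro σ hσ a b
    have := hedge σ hσ s(a, b)
    rwa [Sym2.map_pair_eq, SimpleGraph.mem_edgeSet, SimpleGraph.mem_edgeSet] at this
  · rw [hVPeq]; rfl
  · rw [hEPeq]; rfl
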